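/- Let a > 1, let h, d be positive integers with gcd(a, d) = 1, and let A = (a², ha²+d, ha²+ad, ha²+(a+1)d). Then the Sylvester number satisfies n(A) = (2/3)ha³ + (1/2)(d−h−1)a² − (1/6)ha + (1/2)(1−d). -/

import Mathlib

/-- `m` is representable by the sequence `A`. -/
def IsRepresentable {n : ℕ} (A : Fin n → ℕ) (m : ℕ) : Prop :=
  ∃ x : Fin n → ℕ, m = ∑ i, A i * x i

namespace Stmt14Aux

/-- The Apéry-set value attached to `N = qa + r`. -/
def vv (a h d N : ℕ) : ℕ := h * a ^ 2 * max (N / a) (N % a) + d * N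

/-- The count of non-representable numbers in the residue class of `d*N`. -/
def cnt (a h d N : ℕ) : ℕ := h * max (N / a) (N % a) + d * N / a ^ 2

/-- The explicit finset of non-representable numbers. -/
noncomputable def F (a h d : ℕ) : Finset ℕ :=
  (Finset.Ico 1 (a ^ 2)).biUnion
    (fun N => (Finset.range (cnt a h d N)).image (fun j => d * N % a ^ 2 + j * a ^ 2))

lemma le_parts_of_lt (a X Y Z : ℕ) (ha : 1 < a) (hL : X + a * Y + (a + 1) * Z < a ^ 2) :
    max ((X + a * Y + (a + 1) * Z) / a) ((X + a * Y + (a + 1) * Z) % a) ≤ X + Y + Z := by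
  have ha0 : 0 < a := by omega
  set L := X + a * Y + (a + 1) * Z with hLdef
  have hL' : L < a * a := by rw [pow_two] at hL; exact hL
  have hmodeq : (X + Z) % a = L % a := by
    have h1 : L = (X + Z) + a * (Y + Z) := by ring
    rw [h1, Nat.add_mul_mod_self_left]
  have hr : L % a < a := Nat.mod_lt _ ha0
  have hge_r : L % a ≤ X + Y + Z := by
    rcases lt_or_ge (X + Z) a with hc | hc
    · rw [Nat.mod_eq_of_lt hc] at hmodeq; omega
    · omega
  have hge_q : L / a ≤ X + Y + Z := by
    rcases lt_or_ge (X + Y + Z) a with hc | hc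
    · have hXa : X ≤ a * X := Nat.le_mul_of_pos_left X ha0
      have hZ : Z < a := by omega
      have e1 : L = X + a * Y + a * Z + Z := by rw [hLdef]; ring
      have e2 : (X + Y + Z + 1) * a = a * X + a * Y + a * Z + a := by ring
      have h2 : L < (X + Y + Z + 1) * a := by rw [e1, e2]; linarith
      have := (Nat.div_lt_iff_lt_mul ha0).mpr h2
      omega
    · have h3 : L / a < a := (Nat.div_lt_iff_lt_mul ha0).mpr hL'
      omega
  omega

lemma le_parts_of_ge (a X Y Z : ℕ) (ha : 1 < a) (hL : a ^ 2 ≤ X + a * Y + (a + 1) * Z) :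
    a ≤ X + Y + Z := by
  by_contra hc
  push_neg at hc
  have h1 : X + a * Y + (a + 1) * Z ≤ (a + 1) * (X + Y + Z) := by nlinarith
  have h2 : (a + 1) * (X + Y + Z) ≤ (a + 1) * (a - 1) := by
    apply Nat.mul_le_mul_left; omega
  have h3 : (a + 1) * (a - 1) < a ^ 2 := by
    have h4 : a - 1 + 1 = a := by omega
    nlinarith [h4]
  omega

lemma rep_iff (a h d : ℕ) (ha : 1 < a) (m : ℕ) :
    IsRepresentable ![a ^ 2, h * a ^ 2 + d, h * a ^ 2 + a * d, h * a ^ 2 + (a + 1) * d] m ↔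
      ∃ N < a ^ 2, m % a ^ 2 = d * N % a ^ 2 ∧ vv a h d N ≤ m := by
  have ha0 : 0 < a := by omega
  have hM : 0 < a ^ 2 := by positivity
  constructor
  · rintro ⟨x, hx⟩
    simp only [Fin.sum_univ_four, Matrix.cons_val_zero, Matrix.cons_val_one, Matrix.head_cons,
      Matrix.cons_val_two, Matrix.tail_cons, Matrix.cons_val_three] at hx
    set W := x 0
    set X := x 1
    set Y := x 2
    set Z := x 3
    set L := X + a * Y + (a + 1) * Z with hLdef
    have hm2 : m = a ^ 2 * W + h * a ^ 2 * (X + Y + Z) + d * L := by rw [hx, hLdef]; ring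
    set N := L % a ^ 2 with hNdef
    have hN : N < a ^ 2 := Nat.mod_lt _ hM
    have hNL : N ≤ L := Nat.mod_le _ _
    have hmax : max (N / a) (N % a) ≤ X + Y + Z := by
      rcases lt_or_ge L (a ^ 2) with hc | hc
      · have hNL' : N = L := Nat.mod_eq_of_lt hc
        rw [hNL', hLdef]
        exact le_parts_of_lt a X Y Z ha hc
      · have hS : a ≤ X + Y + Z := le_parts_of_ge a X Y Z ha hc
        have h1 : N / a < a := by
          refine (Nat.div_lt_iff_lt_mul ha0).mpr ?_
          rw [← pow_two]; exact hN
        have h2 : N % a < a := Nat.mod_lt _ ha0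
        omega
    clear_value W X Y Z L N
    refine ⟨N, hN, ?_, ?_⟩
    · have e1 : m = d * L + a ^ 2 * (W + h * (X + Y + Z)) := by rw [hm2]; ring
      rw [e1, Nat.add_mul_mod_self_left, Nat.mul_mod d L, Nat.mul_mod d N,
        Nat.mod_eq_of_lt hN, ← hNdef]
    · have h1 : h * a ^ 2 * max (N / a) (N % a) ≤ h * a ^ 2 * (X + Y + Z) :=
        Nat.mul_le_mul_left _ hmax
      have h2 : d * N ≤ d * L := Nat.mul_le_mul_left _ hNL
      unfold vv
      have h3 : h * a ^ 2 * (X + Y + Z) + d * L ≤ m := by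
        rw [hm2]; exact Nat.add_le_add_right (Nat.le_add_left _ _) _
      exact le_trans (add_le_add h1 h2) h3
  · rintro ⟨N, hN, hmod, hle⟩
    obtain ⟨q, r, hrlt, hqr⟩ : ∃ q r, r < a ∧ N = a * q + r :=
      ⟨N / a, N % a, Nat.mod_lt _ ha0, (Nat.div_add_mod N a).symm⟩
    have hNq : N / a = q := by rw [hqr, Nat.mul_add_div ha0, Nat.div_eq_of_lt hrlt, add_zero]
    have hNr : N % a = r := by rw [hqr, Nat.mul_add_mod, Nat.mod_eq_of_lt hrlt]
    have hvv : vv a h d N = h * a ^ 2 * max q r + d * (a * q + r) := by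
      unfold vv; rw [hNq, hNr, ← hqr]
    have hvmod : vv a h d N % a ^ 2 = d * N % a ^ 2 := by
      have e1 : vv a h d N = d * N + a ^ 2 * (h * max (N / a) (N % a)) := by unfold vv; ring
      rw [e1, Nat.add_mul_mod_self_left]
    have hdvd : a ^ 2 ∣ m - vv a h d N :=
      (Nat.modEq_iff_dvd' hle).mp (show vv a h d N ≡ m [MOD a ^ 2] from hvmod.trans hmod.symm)
    obtain ⟨k, hk⟩ := hdvd
    have hmk : m = vv a h d N + a ^ 2 * k := by omega
    rcases le_or_gt r q with hc | hc
    · obtain ⟨u, hu⟩ : ∃ u, q = u + r := ⟨q - r, by omega⟩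
      refine ⟨![k, 0, u, r], ?_⟩
      simp only [Fin.sum_univ_four, Matrix.cons_val_zero, Matrix.cons_val_one, Matrix.head_cons,
        Matrix.cons_val_two, Matrix.tail_cons, Matrix.cons_val_three]
      rw [hmk, hvv, max_eq_left hc, hu]
      ring
    · obtain ⟨u, hu⟩ : ∃ u, r = u + q := ⟨r - q, by omega⟩
      refine ⟨![k, u, 0, q], ?_⟩
      simp only [Fin.sum_univ_four, Matrix.cons_val_zero, Matrix.cons_val_one, Matrix.head_cons,
        Matrix.cons_val_two, Matrix.tail_cons, Matrix.cons_val_three]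
      rw [hmk, hvv, max_eq_right hc.le, hu]
      ring

lemma exists_unique_N (a d : ℕ) (ha : 1 < a) (hcop : Nat.Coprime d (a ^ 2)) (m : ℕ) :
    ∃! N, N < a ^ 2 ∧ d * N % a ^ 2 = m % a ^ 2 := by
  have hM : 1 < a ^ 2 := by nlinarith
  obtain ⟨e, -, he⟩ := Nat.exists_mul_mod_eq_one_of_coprime hcop hM
  have key : d * (e * m % a ^ 2) % a ^ 2 = m % a ^ 2 := by
    have h0 : d * (e * m % a ^ 2) ≡ d * (e * m) [MOD a ^ 2] :=
      Nat.ModEq.mul_left d (Nat.mod_modEq _ _)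
    have h1 : d * (e * m) = d * e * m := by ring
    have h2 : d * e * m ≡ 1 * m [MOD a ^ 2] :=
      Nat.ModEq.mul_right m (he ▸ (Nat.mod_modEq (d * e) (a ^ 2)).symm)
    have h3 := (h0.trans (h1 ▸ h2))
    rw [one_mul] at h3
    exact h3
  refine ⟨e * m % a ^ 2, ⟨Nat.mod_lt _ (by omega), key⟩, ?_⟩
  rintro N' ⟨hN', hmod'⟩
  have h1 : d * N' ≡ d * (e * m % a ^ 2) [MOD a ^ 2] := hmod'.trans key.symm
  have h2 : N' ≡ e * m % a ^ 2 [MOD a ^ 2] :=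
    Nat.ModEq.cancel_left_of_coprime (Nat.coprime_comm.mp hcop) h1
  have h3 : N' % a ^ 2 = (e * m % a ^ 2) % a ^ 2 := h2
  rwa [Nat.mod_eq_of_lt hN', Nat.mod_mod_of_dvd _ dvd_rfl] at h3

lemma vv_eq (a h d N : ℕ) : vv a h d N = d * N % a ^ 2 + cnt a h d N * a ^ 2 := by
  have h1 := Nat.div_add_mod (d * N) (a ^ 2)
  unfold vv cnt
  ring_nf
  omega

lemma mem_F_iff (a h d : ℕ) (ha : 1 < a) (m : ℕ) :
    m ∈ F a h d ↔ ∃ N, (1 ≤ N ∧ N < a ^ 2) ∧ m % a ^ 2 = d * N % a ^ 2 ∧ m < vv a h d N := by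
  have hM : 0 < a ^ 2 := by positivity
  unfold F
  simp only [Finset.mem_biUnion, Finset.mem_Ico, Finset.mem_image, Finset.mem_range]
  constructor
  · rintro ⟨N, ⟨hN1, hN2⟩, j, hj, rfl⟩
    refine ⟨N, ⟨hN1, hN2⟩, ?_, ?_⟩
    · rw [Nat.add_mul_mod_self_right, Nat.mod_mod_of_dvd _ dvd_rfl]
    · rw [vv_eq]
      have h5 : j * a ^ 2 < cnt a h d N * a ^ 2 :=
        Nat.mul_lt_mul_of_lt_of_le hj (le_refl _) hM
      omega
  · rintro ⟨N, ⟨hN1, hN2⟩, hmod, hlt⟩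
    have h1 : d * N % a ^ 2 ≤ m := by have := Nat.mod_le m (a ^ 2); omega
    have h2 : a ^ 2 ∣ m - d * N % a ^ 2 := by
      have h3 : m % a ^ 2 = (d * N % a ^ 2) % a ^ 2 := by
        rw [hmod, Nat.mod_mod_of_dvd _ dvd_rfl]
      exact (Nat.modEq_iff_dvd' h1).mp h3.symm
    obtain ⟨k, hk⟩ := h2
    have hm : m = d * N % a ^ 2 + k * a ^ 2 := by
      have hk2 : m - d * N % a ^ 2 = k * a ^ 2 := by rw [hk]; ring
      omega
    refine ⟨N, ⟨hN1, hN2⟩, k, ?_, hm.symm⟩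
    rw [vv_eq] at hlt
    by_contra hc
    push_neg at hc
    have h5 : cnt a h d N * a ^ 2 ≤ k * a ^ 2 := Nat.mul_le_mul_right _ hc
    omega

lemma notrep_iff (a h d : ℕ) (ha : 1 < a) (hcop : Nat.Coprime d (a ^ 2)) (m : ℕ) :
    ¬ IsRepresentable ![a ^ 2, h * a ^ 2 + d, h * a ^ 2 + a * d, h * a ^ 2 + (a + 1) * d] m ↔
      m ∈ F a h d := by
  have hM : 0 < a ^ 2 := by positivity
  rw [rep_iff a h d ha m, mem_F_iff a h d ha m]
  obtain ⟨N₀, ⟨hN₀lt, hN₀mod⟩, huniq⟩ := exists_unique_N a d ha hcop m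
  constructor
  · intro hnot
    push_neg at hnot
    have hN₀pos : 1 ≤ N₀ := by
      by_contra hz
      push_neg at hz
      have hz0 : N₀ = 0 := by omega
      rw [hz0] at hN₀mod
      have h1 := hnot 0 hM hN₀mod.symm
      have h2 : vv a h d 0 = 0 := by simp [vv]
      omega
    exact ⟨N₀, ⟨hN₀pos, hN₀lt⟩, hN₀mod.symm, hnot N₀ hN₀lt hN₀mod.symm⟩
  · rintro ⟨N, ⟨hN1, hN2⟩, hmod, hlt⟩
    rintro ⟨N', hN', hmod', hle'⟩
    have e1 : N' = N₀ := huniq N' ⟨hN', hmod'.symm⟩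
    have e2 : N = N₀ := huniq N ⟨hN2, hmod.symm⟩
    rw [e1, ← e2] at hle'
    omega

lemma card_F (a h d : ℕ) (ha : 1 < a) (hcop : Nat.Coprime d (a ^ 2)) :
    (F a h d).card = ∑ N ∈ Finset.range (a ^ 2), cnt a h d N := by
  have hM : 0 < a ^ 2 := by positivity
  have hcard : (F a h d).card = ∑ N ∈ Finset.Ico 1 (a ^ 2), cnt a h d N := by
    unfold F
    rw [Finset.card_biUnion]
    · refine Finset.sum_congr rfl fun N _ => ?_
      rw [Finset.card_image_of_injective _ ?_, Finset.card_range]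
      intro j1 j2 hj
      exact Nat.eq_of_mul_eq_mul_right hM (Nat.add_left_cancel hj)
    · intro x hx y hy hxy
      rw [Function.onFun, Finset.disjoint_left]
      rintro m hm1 hm2
      simp only [Finset.mem_image, Finset.mem_range] at hm1 hm2
      obtain ⟨j1, _, he1⟩ := hm1
      obtain ⟨j2, _, he2⟩ := hm2
      have hmx : m % a ^ 2 = d * x % a ^ 2 := by
        rw [← he1, Nat.add_mul_mod_self_right, Nat.mod_mod_of_dvd _ dvd_rfl]
      have hmy : m % a ^ 2 = d * y % a ^ 2 := by
        rw [← he2, Nat.add_mul_mod_self_right, Nat.mod_mod_of_dvd _ dvd_rfl]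
      simp only [Finset.coe_Ico, Set.mem_Ico] at hx hy
      obtain ⟨_, ⟨hu, _⟩, huniq⟩ := exists_unique_N a d ha hcop m
      exact hxy ((huniq x ⟨hx.2, hmx.symm⟩).trans (huniq y ⟨hy.2, hmy.symm⟩).symm)
  rw [hcard, Finset.range_eq_Ico, Finset.sum_eq_sum_Ico_succ_bot hM]
  simp [cnt]

lemma sum_max_mul_six (a : ℕ) :
    (∑ q ∈ Finset.range a, ∑ r ∈ Finset.range a, max q r) * 6 = a * (a - 1) * (4 * a + 1) := by
  induction a with
  | zero => simp
  | succ n ih =>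
    have step : (∑ q ∈ Finset.range (n + 1), ∑ r ∈ Finset.range (n + 1), max q r)
        = (∑ q ∈ Finset.range n, ∑ r ∈ Finset.range n, max q r) + (n * (2 * n + 1)) := by
      rw [Finset.sum_range_succ]
      have h1 : ∀ q ∈ Finset.range n, ∑ r ∈ Finset.range (n + 1), max q r
          = (∑ r ∈ Finset.range n, max q r) + n := by
        intro q hq
        rw [Finset.sum_range_succ, max_eq_right (by simp at hq; omega)]
      have h2 : ∑ r ∈ Finset.range (n + 1), max n r = n * n + n := by
        rw [Finset.sum_range_succ, max_self]
        congr 1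
        rw [Finset.sum_congr rfl fun r hr => max_eq_left (by simp at hr; omega)]
        simp [mul_comm]
      rw [Finset.sum_congr rfl h1, Finset.sum_add_distrib, Finset.sum_const, Finset.card_range,
        h2, smul_eq_mul]
      ring
    rw [step, add_mul, ih]
    rcases n with _ | k
    · simp
    · simp only [Nat.add_sub_cancel]
      ring

lemma sum_max_reindex (a : ℕ) (ha : 0 < a) :
    ∑ N ∈ Finset.range (a ^ 2), max (N / a) (N % a) =
      ∑ q ∈ Finset.range a, ∑ r ∈ Finset.range a, max q r := by
  rw [← Finset.sum_product']
  refine Finset.sum_nbij' (fun N => (N / a, N % a)) (fun p => p.1 * a + p.2) ?_ ?_ ?_ ?_ ?_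
  · intro N hN
    simp only [Finset.mem_range, Finset.mem_product] at *
    constructor
    · refine (Nat.div_lt_iff_lt_mul ha).mpr ?_
      rw [← pow_two]; exact hN
    · exact Nat.mod_lt _ ha
  · intro p hp
    simp only [Finset.mem_range, Finset.mem_product] at *
    have h1 : p.1 * a + p.2 < (p.1 + 1) * a := by nlinarith [hp.1, hp.2]
    have h2 : (p.1 + 1) * a ≤ a * a := by nlinarith [hp.1]
    rw [pow_two]
    omega
  · intro N hN
    show N / a * a + N % a = N
    rw [mul_comm]
    exact Nat.div_add_mod N a
  · intro p hp
    simp only [Finset.mem_range, Finset.mem_product] at hp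
    have h1 : (p.1 * a + p.2) / a = p.1 := by
      rw [mul_comm, Nat.mul_add_div ha, Nat.div_eq_of_lt hp.2, add_zero]
    have h2 : (p.1 * a + p.2) % a = p.2 := by
      rw [mul_comm, Nat.mul_add_mod, Nat.mod_eq_of_lt hp.2]
    show ((p.1 * a + p.2) / a, (p.1 * a + p.2) % a) = p
    rw [h1, h2]
  · intro N hN
    rfl

lemma sum_mod_perm (d M : ℕ) (hM : 1 < M) (hcop : Nat.Coprime d M) :
    ∑ N ∈ Finset.range M, d * N % M = ∑ N ∈ Finset.range M, N := by
  haveI : NeZero M := ⟨by omega⟩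
  set u : (ZMod M)ˣ := ZMod.unitOfCoprime d hcop with hu
  have hstep1 : ∀ N ∈ Finset.range M, d * N % M = ((d : ZMod M) * (N : ZMod M)).val := by
    intro N hN
    simp only [Finset.mem_range] at hN
    rw [ZMod.val_mul, ZMod.val_natCast, ZMod.val_cast_of_lt hN, Nat.mod_mul_mod]
  rw [Finset.sum_congr rfl hstep1]
  have e1 : ∑ N ∈ Finset.range M, ((d : ZMod M) * (N : ZMod M)).val
      = ∑ x : ZMod M, ((d : ZMod M) * x).val := by
    refine Finset.sum_nbij' (fun N => (N : ZMod M)) (fun x => x.val) ?_ ?_ ?_ ?_ ?_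
    · intros; exact Finset.mem_univ _
    · intro x _; simp only [Finset.mem_range]; exact ZMod.val_lt x
    · intro N hN; simp only [Finset.mem_range] at hN; exact ZMod.val_cast_of_lt hN
    · intro x _; exact ZMod.natCast_rightInverse x
    · intros; rfl
  have e2 : ∑ x : ZMod M, ((d : ZMod M) * x).val = ∑ x : ZMod M, x.val := by
    refine Finset.sum_nbij' (fun x => (u : ZMod M) * x) (fun x => ((u⁻¹ : (ZMod M)ˣ) : ZMod M) * x)
      (fun _ _ => Finset.mem_univ _) (fun _ _ => Finset.mem_univ _) ?_ ?_ ?_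
    · intro x _
      show ((u⁻¹ : (ZMod M)ˣ) : ZMod M) * ((u : ZMod M) * x) = x
      rw [← mul_assoc, ← Units.val_mul, inv_mul_cancel, Units.val_one, one_mul]
    · intro x _
      show (u : ZMod M) * (((u⁻¹ : (ZMod M)ˣ) : ZMod M) * x) = x
      rw [← mul_assoc, ← Units.val_mul, mul_inv_cancel, Units.val_one, one_mul]
    · intro x _
      show ((d : ZMod M) * x).val = ((u : ZMod M) * x).val
      rw [hu, ZMod.coe_unitOfCoprime]
  have e3 : ∑ x : ZMod M, x.val = ∑ N ∈ Finset.range M, N := by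
    refine Finset.sum_nbij' (fun x => x.val) (fun N => (N : ZMod M)) ?_ ?_ ?_ ?_ ?_
    · intro x _; simp only [Finset.mem_range]; exact ZMod.val_lt x
    · intros; exact Finset.mem_univ _
    · intro x _; exact ZMod.natCast_rightInverse x
    · intro N hN; simp only [Finset.mem_range] at hN; exact ZMod.val_cast_of_lt hN
    · intros; rfl
  rw [e1, e2, e3]

lemma sum_div_mul_two (a d : ℕ) (ha : 1 < a) (hd : 0 < d) (hcop : Nat.Coprime d (a ^ 2)) :
    (∑ N ∈ Finset.range (a ^ 2), d * N / a ^ 2) * 2 = (d - 1) * (a ^ 2 - 1) := by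
  have hM : 1 < a ^ 2 := by nlinarith
  obtain ⟨e, rfl⟩ := Nat.exists_eq_add_of_le hd
  set S := ∑ N ∈ Finset.range (a ^ 2), (1 + e) * N / a ^ 2 with hS
  set T := ∑ N ∈ Finset.range (a ^ 2), N with hT
  have h0 : ∀ N ∈ Finset.range (a ^ 2),
      (1 + e) * N = a ^ 2 * ((1 + e) * N / a ^ 2) + (1 + e) * N % a ^ 2 :=
    fun N _ => (Nat.div_add_mod _ _).symm
  have hsum : (1 + e) * T = a ^ 2 * S + T := by
    rw [hT, Finset.mul_sum, Finset.sum_congr rfl h0, Finset.sum_add_distrib, ← Finset.mul_sum,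
      sum_mod_perm (1 + e) (a ^ 2) hM hcop]
  have he : a ^ 2 * S = e * T := by
    have hexp : (1 + e) * T = e * T + T := by ring
    omega
  have hfin : a ^ 2 * (S * 2) = a ^ 2 * (e * (a ^ 2 - 1)) := by
    calc a ^ 2 * (S * 2) = (a ^ 2 * S) * 2 := by ring
      _ = (e * T) * 2 := by rw [he]
      _ = e * (T * 2) := by ring
      _ = e * (a ^ 2 * (a ^ 2 - 1)) := by rw [hT, Finset.sum_range_id_mul_two]
      _ = a ^ 2 * (e * (a ^ 2 - 1)) := by ring
  have hres : S * 2 = e * (a ^ 2 - 1) := Nat.eq_of_mul_eq_mul_left (by omega) hfin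
  simpa [Nat.add_sub_cancel_left] using hres

end Stmt14Aux

open Stmt14Aux in
/-- For `A = (a², ha²+d, ha²+ad, ha²+(a+1)d)` with `a > 1`, `h, d ≥ 1` and
`gcd(a, d) = 1`: `n(A) = (2/3)ha³ + (1/2)(d-h-1)a² - (1/6)ha + (1/2)(1-d)`. -/
theorem stmt_14 (a h d : ℕ) (ha : 1 < a) (hh : 0 < h) (hd : 0 < d)
    (had : Nat.gcd a d = 1) :
    (({m : ℕ | ¬ IsRepresentable
        ![a ^ 2, h * a ^ 2 + d, h * a ^ 2 + a * d, h * a ^ 2 + (a + 1) * d] m}.ncard : ℚ)) =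
      (2 / 3) * h * a ^ 3 + (1 / 2) * ((d : ℚ) - h - 1) * a ^ 2
        - (1 / 6) * h * a + (1 / 2) * (1 - (d : ℚ)) := by
  have hcop : Nat.Coprime d (a ^ 2) := (Nat.Coprime.pow_right 2 (Nat.coprime_comm.mp had))
  have hset : {m : ℕ | ¬ IsRepresentable
      ![a ^ 2, h * a ^ 2 + d, h * a ^ 2 + a * d, h * a ^ 2 + (a + 1) * d] m} = ↑(F a h d) := by
    ext m
    simp only [Set.mem_setOf_eq, Finset.mem_coe]
    exact notrep_iff a h d ha hcop m
  rw [hset, Set.ncard_coe_finset, card_F a h d ha hcop]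
  have hsplit : ∑ N ∈ Finset.range (a ^ 2), cnt a h d N
      = h * (∑ N ∈ Finset.range (a ^ 2), max (N / a) (N % a))
        + ∑ N ∈ Finset.range (a ^ 2), d * N / a ^ 2 := by
    unfold cnt
    rw [Finset.sum_add_distrib, Finset.mul_sum]
  rw [hsplit, sum_max_reindex a (by omega)]
  have c6 := sum_max_mul_six a
  have c2 := sum_div_mul_two a d ha hd hcop
  have h1a : (1 : ℕ) ≤ a := ha.le
  have h1d : (1 : ℕ) ≤ d := hd
  have h1M : (1 : ℕ) ≤ a ^ 2 := by nlinarith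
  set s1 := ∑ q ∈ Finset.range a, ∑ r ∈ Finset.range a, max q r with hs1
  set s2 := ∑ N ∈ Finset.range (a ^ 2), d * N / a ^ 2 with hs2
  clear_value s1 s2
  have C6 : (s1 : ℚ) * 6 = (a : ℚ) * ((a : ℚ) - 1) * (4 * (a : ℚ) + 1) := by
    have hc := congrArg (fun n : ℕ => (n : ℚ)) c6
    push_cast [Nat.cast_sub h1a] at hc
    exact hc
  have C2 : (s2 : ℚ) * 2 = ((d : ℚ) - 1) * ((a : ℚ) ^ 2 - 1) := by
    have hc := congrArg (fun n : ℕ => (n : ℚ)) c2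
    push_cast [Nat.cast_sub h1d, Nat.cast_sub h1M] at hc
    exact hc
  push_cast
  linear_combination ((h : ℚ) / 6) * C6 + (1 / 2 : ℚ) * C2
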